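/- Let X : [a,b] → Sp(2n) be a C¹ path and A ∈ Sp(2n) a symplectic matrix having at least one eigenvalue λ ∈ ℂ with |λ| = 1. Then the path t ↦ X(t)⁻¹ A X(t) is not a positive path. Concretely, writing X'(t) = J Y(t) X(t) with Y(t) symmetric, the symmetric matrix X(t)ᵀ(−Y(t) + A⁻ᵀ Y(t) A⁻¹) X(t) governing the derivative satisfies ⟨(−Y + A⁻ᵀYA⁻¹)v, v⟩ = (|λ|² − 1)⟨Yv, v⟩ = 0 for any eigenvector v of A with eigenvalue λ, |λ| = 1, hence it cannot be positive definite. -/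

import Mathlib

open Matrix Set

noncomputable section

def J2 : Matrix (Fin 2) (Fin 2) ℝ := !![0, -1; 1, 0]

/-- The standard symplectic matrix `J = diag(J₂, …, J₂)`. -/
def Jn (n : ℕ) : Matrix (Fin 2 × Fin n) (Fin 2 × Fin n) ℝ :=
  Matrix.blockDiagonal fun _ => J2

lemma J2_mul_J2 : J2 * J2 = -1 := by
  ext i j
  fin_cases i <;> fin_cases j <;> simp [J2, Matrix.mul_apply, Fin.sum_univ_two]

lemma Jn_mul_Jn (n : ℕ) : Jn n * Jn n = -1 := by
  rw [Jn, ← Matrix.blockDiagonal_mul]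
  simp only [J2_mul_J2]
  have : (fun _ : Fin n => (-1 : Matrix (Fin 2) (Fin 2) ℝ)) = -(fun _ => 1) := rfl
  rw [this, Matrix.blockDiagonal_neg]
  exact congrArg Neg.neg Matrix.blockDiagonal_one

-- symplectic basics
variable {n : ℕ}
lemma sympl_left_inv {B : Matrix (Fin 2 × Fin n) (Fin 2 × Fin n) ℝ}
    (h : Bᵀ * Jn n * B = Jn n) : (-(Jn n * Bᵀ * Jn n)) * B = 1 := by
  have : Jn n * (Bᵀ * Jn n * B) = Jn n * Jn n := by rw [h]
  rw [Jn_mul_Jn] at this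
  calc (-(Jn n * Bᵀ * Jn n)) * B = -(Jn n * (Bᵀ * Jn n * B)) := by
        noncomm_ring [Matrix.mul_assoc]
    _ = 1 := by rw [this]; simp

lemma sympl_isUnit {B : Matrix (Fin 2 × Fin n) (Fin 2 × Fin n) ℝ}
    (h : Bᵀ * Jn n * B = Jn n) : IsUnit B :=
  (Matrix.isUnit_iff_isUnit_det _).mpr (Matrix.isUnit_det_of_left_inverse (sympl_left_inv h))

lemma sympl_inv_eq {B : Matrix (Fin 2 × Fin n) (Fin 2 × Fin n) ℝ}
    (h : Bᵀ * Jn n * B = Jn n) : B⁻¹ = -(Jn n * Bᵀ * Jn n) :=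
  Matrix.inv_eq_left_inv (sympl_left_inv h)

section complexify
variable {N : Type*} [Fintype N] [DecidableEq N]

lemma mapC_mul (M P : Matrix N N ℝ) :
    (M * P).map (fun x : ℝ => (x : ℂ)) = M.map (fun x : ℝ => (x : ℂ)) * P.map (fun x : ℝ => (x : ℂ)) := by
  ext i j
  simp [Matrix.map_apply, Matrix.mul_apply]

lemma mapC_one : (1 : Matrix N N ℝ).map (fun x : ℝ => (x : ℂ)) = 1 := by
  ext i j
  by_cases h : i = j <;> simp [Matrix.map_apply, Matrix.one_apply, h]

lemma mapC_mulVec_star (R : Matrix N N ℝ) (v : N → ℂ) :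
    (R.map (fun x : ℝ => (x : ℂ))) *ᵥ star v = star ((R.map (fun x : ℝ => (x : ℂ))) *ᵥ v) := by
  funext i
  simp only [Matrix.mulVec, dotProduct, Pi.star_apply, star_sum, star_mul',
    Matrix.map_apply]
  congr 1; funext j
  simp [mul_comm]

lemma form_vanish (A Yt : Matrix N N ℝ) (hAu : IsUnit A)
    (lam : ℂ) (hlam : ‖lam‖ = 1)
    (v : N → ℂ)
    (heig : (A.map (fun x : ℝ => (x : ℂ))) *ᵥ v = lam • v) :
    star v ⬝ᵥ (((-Yt + ((A⁻¹)ᵀ) * Yt * A⁻¹).map (fun x : ℝ => (x : ℂ))) *ᵥ v) = 0 := by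
  have hlam0 : lam ≠ 0 := by
    intro h; rw [h] at hlam; simp at hlam
  have hdet : IsUnit A.det := (Matrix.isUnit_iff_isUnit_det A).mp hAu
  set B := A.map (fun x : ℝ => (x : ℂ)) with hB
  set C := (A⁻¹).map (fun x : ℝ => (x : ℂ)) with hC
  have hCB : C * B = 1 := by
    rw [hB, hC, ← mapC_mul, Matrix.nonsing_inv_mul A hdet, mapC_one]
  have hCv : C *ᵥ v = lam⁻¹ • v := by
    have h1 : C *ᵥ (B *ᵥ v) = v := by
      rw [Matrix.mulVec_mulVec, hCB, Matrix.one_mulVec]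
    rw [heig, Matrix.mulVec_smul] at h1
    calc C *ᵥ v = lam⁻¹ • (lam • (C *ᵥ v)) := by
          rw [smul_smul, inv_mul_cancel₀ hlam0, one_smul]
      _ = lam⁻¹ • v := by rw [h1]
  set W := Yt.map (fun x : ℝ => (x : ℂ)) with hW
  have hexpand : ((-Yt + ((A⁻¹)ᵀ) * Yt * A⁻¹).map (fun x : ℝ => (x : ℂ)))
      = -W + Cᵀ * W * C := by
    ext i j
    simp [Matrix.map_apply, Matrix.add_apply, Matrix.neg_apply, Matrix.mul_apply, hW, hC,
      Matrix.transpose_apply, Finset.mul_sum, Finset.sum_mul]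
  rw [hexpand, Matrix.add_mulVec, Matrix.neg_mulVec, dotProduct_add,
    dotProduct_neg]
  have hterm2 : star v ⬝ᵥ ((Cᵀ * W * C) *ᵥ v) = star v ⬝ᵥ (W *ᵥ v) := by
    have h2 : (Cᵀ * W * C) *ᵥ v = Cᵀ *ᵥ (W *ᵥ (C *ᵥ v)) := by
      rw [Matrix.mulVec_mulVec, Matrix.mulVec_mulVec]
    rw [h2, hCv, Matrix.mulVec_smul, Matrix.mulVec_smul, dotProduct_smul,
      Matrix.dotProduct_mulVec, Matrix.vecMul_transpose, hC, mapC_mulVec_star, ← hC, hCv]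
    rw [star_smul, smul_dotProduct, smul_smul]
    have hone : (lam⁻¹ * star lam⁻¹) = 1 := by
      rw [Complex.star_def, Complex.mul_conj]
      norm_cast
      simp [Complex.normSq_inv, ← Complex.sq_norm, hlam]
    rw [hone, one_smul]
  rw [hterm2]
  ring
end complexify

section posdef
variable {N : Type*} [Fintype N] [DecidableEq N]

lemma posdef_complex_form {P : Matrix N N ℝ} (hP : P.PosDef) {v : N → ℂ} (hv : v ≠ 0) :
    0 < (star v ⬝ᵥ ((P.map (fun x : ℝ => (x : ℂ))) *ᵥ v)).re := by
  set x : N → ℝ := fun i => (v i).re with hx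
  set y : N → ℝ := fun i => (v i).im with hy
  have key : (star v ⬝ᵥ ((P.map (fun x : ℝ => (x : ℂ))) *ᵥ v)).re
      = x ⬝ᵥ (P *ᵥ x) + y ⬝ᵥ (P *ᵥ y) := by
    simp only [dotProduct, Matrix.mulVec, Pi.star_apply, Matrix.map_apply,
      Complex.re_sum, Complex.mul_re, Complex.star_def, Complex.conj_re, Complex.conj_im,
      Complex.re_sum, Complex.im_sum, Complex.re_ofReal_mul, Complex.im_ofReal_mul,
      ← Finset.sum_add_distrib]
    refine Finset.sum_congr rfl fun i _ => ?_
    simp only [Complex.ofReal_re, Complex.ofReal_im, zero_mul, sub_zero, Finset.mul_sum]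
    rw [← Finset.sum_sub_distrib, ← Finset.sum_add_distrib]
    refine Finset.sum_congr rfl fun j _ => ?_
    simp only [hx, hy]
    ring
  rw [key]
  have hxy : x ≠ 0 ∨ y ≠ 0 := by
    by_contra h
    push_neg at h
    apply hv
    funext i
    have h1 := congrFun h.1 i
    have h2 := congrFun h.2 i
    exact Complex.ext h1 h2
  have psd := hP.posSemidef
  rcases hxy with h | h
  · have h1 : 0 < x ⬝ᵥ (P *ᵥ x) := by simpa using hP.dotProduct_mulVec_pos h
    have h2 : 0 ≤ y ⬝ᵥ (P *ᵥ y) := by simpa using psd.dotProduct_mulVec_nonneg y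
    linarith
  · have h1 : 0 ≤ x ⬝ᵥ (P *ᵥ x) := by simpa using psd.dotProduct_mulVec_nonneg x
    have h2 : 0 < y ⬝ᵥ (P *ᵥ y) := by simpa using hP.dotProduct_mulVec_pos h
    linarith
end posdef

lemma sympl_mul_transpose {n : ℕ} {B : Matrix (Fin 2 × Fin n) (Fin 2 × Fin n) ℝ}
    (h : Bᵀ * Jn n * B = Jn n) : B * Jn n * Bᵀ = Jn n := by
  have hdet : IsUnit B.det := (Matrix.isUnit_iff_isUnit_det B).mp (sympl_isUnit h)
  have hXX : B * B⁻¹ = 1 := Matrix.mul_nonsing_inv _ hdet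
  rw [sympl_inv_eq h, mul_neg] at hXX
  have h2 : B * (Jn n * Bᵀ * Jn n) = -1 := by
    rw [← neg_eq_iff_eq_neg]; exact hXX
  have h3 := congrArg (fun Z => Z * Jn n) h2
  simp only [Matrix.mul_assoc] at h3
  rw [Jn_mul_Jn] at h3
  simp only [mul_neg, mul_one, neg_mul, one_mul, neg_inj] at h3
  simpa [Matrix.mul_assoc] using h3


/-- If `A ∈ Sp(2n)` has an eigenvalue on the unit circle, then for any `C¹` family
`X(t)` of symplectic matrices with `X' = JYX`, `Y` symmetric, the conjugated path
`t ↦ X(t)⁻¹ A X(t)` is not a positive path; moreover the Hermitian form of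
`−Y + A⁻ᵀ Y A⁻¹` vanishes on any unit-circle eigenvector `v` of `A`. -/
theorem conjugation_path_not_positive {n : ℕ} (a b : ℝ) (hab : a ≤ b)
    (A : Matrix (Fin 2 × Fin n) (Fin 2 × Fin n) ℝ)
    (hA : Aᵀ * Jn n * A = Jn n)
    (lam : ℂ) (hlam : ‖lam‖ = 1)
    (v : Fin 2 × Fin n → ℂ) (hv : v ≠ 0)
    (heig : (A.map (fun x : ℝ => (x : ℂ))) *ᵥ v = lam • v)
    (X Y : ℝ → Matrix (Fin 2 × Fin n) (Fin 2 × Fin n) ℝ)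
    (hspX : ∀ t ∈ Icc a b, (X t)ᵀ * Jn n * X t = Jn n)
    (hY : ∀ t ∈ Icc a b, (Y t)ᵀ = Y t)
    (hdX : ∀ t ∈ Icc a b, ∀ i j,
      HasDerivAt (fun s => X s i j) ((Jn n * Y t * X t) i j) t) :
    (∀ t ∈ Icc a b,
      star v ⬝ᵥ (((-(Y t) + ((A⁻¹)ᵀ) * Y t * A⁻¹).map (fun x : ℝ => (x : ℂ))) *ᵥ v)
        = 0) ∧
    ¬ ∃ P : ℝ → Matrix (Fin 2 × Fin n) (Fin 2 × Fin n) ℝ,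
        (∀ i j, ContinuousOn (fun t => P t i j) (Icc a b)) ∧
        ∀ t ∈ Icc a b, (P t)ᵀ = P t ∧ (P t).PosDef ∧
          ∀ i j, HasDerivAt (fun s => ((X s)⁻¹ * A * X s) i j)
            ((Jn n * P t * ((X t)⁻¹ * A * X t)) i j) t := by
  have hAu : IsUnit A := sympl_isUnit hA
  have hAdet : IsUnit A.det := (Matrix.isUnit_iff_isUnit_det A).mp hAu
  constructor
  · intro t _
    exact form_vanish A (Y t) hAu lam hlam v heig
  rintro ⟨P, hPc, hPt⟩
  have ha : a ∈ Icc a b := left_mem_Icc.mpr hab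
  obtain ⟨hsym, hpos, hder⟩ := hPt a ha
  set L := Jn n with hLdef
  set Xa := X a with hXadef
  set Ya := Y a with hYadef
  set Pa := P a with hPadef
  set M : Matrix (Fin 2 × Fin n) (Fin 2 × Fin n) ℝ := Xa⁻¹ * A * Xa with hMdef
  have hXa : Xaᵀ * L * Xa = L := hspX a ha
  have hXu : IsUnit Xa := sympl_isUnit hXa
  have hXdet : IsUnit Xa.det := (Matrix.isUnit_iff_isUnit_det Xa).mp hXu
  have hJJ : L * L = -1 := Jn_mul_Jn n
  have hLu : IsUnit L := (Matrix.isUnit_iff_isUnit_det _).mpr (Matrix.isUnit_det_of_left_inverse (B := -L)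
    (by rw [neg_mul, hJJ, neg_neg]))
  have hMu : IsUnit M := ((Matrix.isUnit_nonsing_inv_iff.mpr hXu).mul hAu).mul hXu
  -- derivative identity
  have hdet_ev : ∀ᶠ s in nhds a, IsUnit (X s).det := by
    have hXcont : ContinuousAt (fun s => X s) a :=
      continuousAt_pi.2 fun i => continuousAt_pi.2 fun j => (hdX a ha i j).continuousAt
    have hdc : ContinuousAt (fun s => (X s).det) a :=
      (Continuous.matrix_det continuous_id).continuousAt.comp hXcont
    have hne : (X a).det ≠ 0 := by
      simpa [isUnit_iff_ne_zero] using hXdet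
    filter_upwards [hdc.eventually_ne hne] with s hs
    simpa [isUnit_iff_ne_zero] using hs
  have hE : L * Ya * Xa * M + Xa * (L * Pa * M) = A * (L * Ya * Xa) := by
    ext i j
    have hLHS : HasDerivAt
        (fun s => ∑ k, X s i k * ((X s)⁻¹ * A * X s) k j)
        (∑ k, ((L * Ya * Xa) i k * M k j + Xa i k * ((L * Pa * M)) k j)) a :=
      HasDerivAt.fun_sum (fun k _ => (hdX a ha i k).mul (hder k j))
    have hev : (fun s => (A * X s) i j)
        =ᶠ[nhds a] (fun s => ∑ k, X s i k * ((X s)⁻¹ * A * X s) k j) := by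
      filter_upwards [hdet_ev] with s hs
      have h1 : X s * ((X s)⁻¹ * A * X s) = A * X s := by
        rw [← Matrix.mul_assoc, ← Matrix.mul_assoc, Matrix.mul_nonsing_inv _ hs, one_mul]
      rw [← h1, Matrix.mul_apply]
    have hRHS : HasDerivAt (fun s => (A * X s) i j) ((A * (L * Ya * Xa)) i j) a := by
      have h0 : HasDerivAt (fun s => ∑ k, A i k * X s k j)
          (∑ k, A i k * (L * Ya * Xa) k j) a :=
        HasDerivAt.fun_sum (fun k _ => (hdX a ha k j).const_mul (A i k))
      have hfun : (fun s => (A * X s) i j) = fun s => ∑ k, A i k * X s k j := by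
        funext s; rw [Matrix.mul_apply]
      rw [hfun, Matrix.mul_apply]
      exact h0
    have := (hLHS.congr_of_eventuallyEq hev).unique hRHS
    rw [Matrix.add_apply, Matrix.mul_apply, Matrix.mul_apply, ← Finset.sum_add_distrib]
    exact this
  -- algebra: solve for Pa
  have hXLXT : Xa * L * Xaᵀ = L := sympl_mul_transpose hXa
  have hALAT : A * L * Aᵀ = L := sympl_mul_transpose hA
  have hAAinv : A * A⁻¹ = 1 := Matrix.mul_nonsing_inv _ hAdet
  have hAinvA : A⁻¹ * A = 1 := Matrix.nonsing_inv_mul _ hAdet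
  have hXXinv : Xa * Xa⁻¹ = 1 := Matrix.mul_nonsing_inv _ hXdet
  have hTinv : (Aᵀ)⁻¹ = (A⁻¹)ᵀ := by
    refine Matrix.inv_eq_left_inv ?_
    rw [← Matrix.transpose_mul, hAAinv, Matrix.transpose_one]
  have hATinv : Aᵀ * (A⁻¹)ᵀ = 1 := by
    rw [← Matrix.transpose_mul, hAinvA, Matrix.transpose_one]
  have hALA : L * (A⁻¹)ᵀ = A * L := by
    have h4 := congrArg (fun Z => Z * (A⁻¹)ᵀ) hALAT
    simp only [Matrix.mul_assoc] at h4
    rw [hATinv, mul_one] at h4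
    simpa [Matrix.mul_assoc] using h4.symm
  have hXM : Xa * M = A * Xa := by
    rw [hMdef, ← Matrix.mul_assoc, ← Matrix.mul_assoc, hXXinv, one_mul]
  have hcan1 : ∀ Z, Xa * (L * (Xaᵀ * Z)) = L * Z := fun Z => by
    calc Xa * (L * (Xaᵀ * Z)) = Xa * L * Xaᵀ * Z := by simp only [Matrix.mul_assoc]
      _ = L * Z := by rw [hXLXT]
  have hcan2 : ∀ Z, A⁻¹ * (A * Z) = Z := fun Z => by
    rw [← Matrix.mul_assoc, hAinvA, one_mul]
  have hcan3 : ∀ Z, L * ((A⁻¹)ᵀ * Z) = A * (L * Z) := fun Z => by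
    calc L * ((A⁻¹)ᵀ * Z) = L * (A⁻¹)ᵀ * Z := by rw [Matrix.mul_assoc]
      _ = A * L * Z := by rw [hALA]
      _ = A * (L * Z) := by rw [Matrix.mul_assoc]
  set Qm : Matrix (Fin 2 × Fin n) (Fin 2 × Fin n) ℝ :=
    -Ya + ((A⁻¹)ᵀ) * Ya * A⁻¹ with hQmdef
  have hE0 : L * Ya * Xa * M + Xa * (L * (Xaᵀ * Qm * Xa) * M) = A * (L * Ya * Xa) := by
    rw [hQmdef]
    simp only [Matrix.add_mul, Matrix.mul_add, Matrix.neg_mul, Matrix.mul_neg,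
      Matrix.mul_assoc]
    rw [hXM, hcan2]
    rw [hcan1, hcan1, hcan3]
    abel
  have hPa : Pa = Xaᵀ * Qm * Xa := by
    have h5 : Xa * (L * Pa * M) = Xa * (L * (Xaᵀ * Qm * Xa) * M) := by
      have := hE.trans hE0.symm
      exact add_left_cancel this
    have h6 : L * Pa * M = L * (Xaᵀ * Qm * Xa) * M := hXu.mul_left_cancel h5
    have h7 : L * Pa = L * (Xaᵀ * Qm * Xa) := hMu.mul_right_cancel h6
    exact hLu.mul_left_cancel h7
  -- final contradiction
  set c : ℝ → ℂ := fun x => (x : ℂ) with hcdef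
  set w : (Fin 2 × Fin n) → ℂ := ((Xa⁻¹).map c) *ᵥ v with hwdef
  have hXw : (Xa.map c) *ᵥ w = v := by
    rw [hwdef, Matrix.mulVec_mulVec, ← mapC_mul, hXXinv, mapC_one, Matrix.one_mulVec]
  have hw0 : w ≠ 0 := by
    intro h
    apply hv
    rw [← hXw, h, Matrix.mulVec_zero]
  have hform : star w ⬝ᵥ ((Pa.map c) *ᵥ w) = 0 := by
    rw [hPa, mapC_mul, mapC_mul, Matrix.transpose_map]
    rw [← Matrix.mulVec_mulVec, ← Matrix.mulVec_mulVec, hXw]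
    rw [Matrix.dotProduct_mulVec, Matrix.vecMul_transpose, mapC_mulVec_star, hXw]
    exact form_vanish A Ya hAu lam hlam v heig
  have hposd := posdef_complex_form hpos hw0
  rw [hform] at hposd
  simp at hposd
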